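/- There is an absolute constant C > 0 such that for all real x ≥ 1, the number of positive integers m with φ(m) ≤ x is at most C x; equivalently, ∑_{d ≤ x} #Ψ(d) ≤ C x. -/

import Mathlib

open Finset

/-- ratio m = m / φ(m) as a real. -/
noncomputable def rr (m : ℕ) : ℝ := (m : ℝ) / (Nat.totient m : ℝ)

lemma totient_pos_real {m : ℕ} (hm : 0 < m) : (0:ℝ) < (Nat.totient m : ℝ) := by
  exact_mod_cast Nat.totient_pos.mpr hm

lemma rr_eq_prod {m : ℕ} (hm : 0 < m) :
    rr m = ∏ p ∈ m.primeFactors, ((p:ℝ) / ((p:ℝ) - 1)) := by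
  have key := Nat.totient_mul_prod_primeFactors m
  have hcast : ((Nat.totient m : ℝ)) * ∏ p ∈ m.primeFactors, (p:ℝ)
      = (m:ℝ) * ∏ p ∈ m.primeFactors, ((p:ℝ) - 1) := by
    have h1 : ∏ p ∈ m.primeFactors, ((p:ℝ) - 1) = ((∏ p ∈ m.primeFactors, (p - 1) : ℕ) : ℝ) := by
      push_cast
      refine Finset.prod_congr rfl fun p hp => ?_
      have : 1 ≤ p := (Nat.prime_of_mem_primeFactors hp).one_lt.le
      rw [Nat.cast_sub this, Nat.cast_one]
    rw [h1]
    rw [← Nat.cast_prod, ← Nat.cast_mul, ← Nat.cast_mul]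
    exact_mod_cast congrArg (Nat.cast : ℕ → ℝ) key
  have hφ : (0:ℝ) < (Nat.totient m : ℝ) := totient_pos_real hm
  have hprodpos : ∀ p ∈ m.primeFactors, (0:ℝ) < (p:ℝ) - 1 := by
    intro p hp
    have : 2 ≤ p := (Nat.prime_of_mem_primeFactors hp).two_le
    have : (2:ℝ) ≤ (p:ℝ) := by exact_mod_cast this
    linarith
  have hP : (0:ℝ) < ∏ p ∈ m.primeFactors, ((p:ℝ) - 1) :=
    Finset.prod_pos hprodpos
  rw [rr, Finset.prod_div_distrib, div_eq_div_iff hφ.ne' hP.ne']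
  linarith [hcast]

/-- the prime weight -/
noncomputable def gg (p : ℕ) : ℝ := ((p:ℝ) / ((p:ℝ) - 1))^2 - 1

lemma one_lt_cast_of_prime {p : ℕ} (hp : p.Prime) : (1:ℝ) < (p:ℝ) := by
  exact_mod_cast hp.one_lt

lemma gg_nonneg {p : ℕ} (hp : p.Prime) : 0 ≤ gg p := by
  have h1 : (1:ℝ) < (p:ℝ) := one_lt_cast_of_prime hp
  have h : (1:ℝ) ≤ (p:ℝ) / ((p:ℝ) - 1) := by
    rw [le_div_iff₀ (by linarith)]
    linarith
  have := one_le_pow₀ (n := 2) h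
  simp only [gg]
  nlinarith [h]

lemma rr_sq_eq {m : ℕ} (hm : 0 < m) :
    (rr m)^2 = ∑ S ∈ m.primeFactors.powerset, ∏ p ∈ S, gg p := by
  rw [rr_eq_prod hm, ← Finset.prod_pow]
  have h : ∀ p ∈ m.primeFactors, ((p:ℝ) / ((p:ℝ) - 1))^2 = gg p + 1 := by
    intro p hp
    simp [gg]
  rw [Finset.prod_congr rfl h, Finset.prod_add]
  simp

lemma sum_sq_one_div_le : ∀ B : ℕ, 2 ≤ B →
    ∑ n ∈ Finset.Icc 2 B, (1:ℝ)/((n:ℝ)-1)^2 ≤ 2 - 1/((B:ℝ)-1) := by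
  intro B hB
  induction B, hB using Nat.le_induction with
  | base =>
    norm_num
  | succ B hB ih =>
    rw [Finset.sum_Icc_succ_top (by omega : 2 ≤ B + 1)]
    have hB1 : (1:ℝ) ≤ (B:ℝ) := by exact_mod_cast hB.trans' (by norm_num)
    have hB2 : (2:ℝ) ≤ (B:ℝ) := by exact_mod_cast hB
    have hcast : ((B+1:ℕ):ℝ) - 1 = (B:ℝ) := by push_cast; ring
    rw [hcast]
    have h2 : (1:ℝ)/(B:ℝ)^2 ≤ 1/((B:ℝ)-1) - 1/(B:ℝ) := by
      rw [div_sub_div _ _ (by linarith) (by linarith)]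
      rw [div_le_div_iff₀ (by positivity) (by nlinarith)]
      ring_nf
      nlinarith
    linarith [ih]

lemma sum_rr_sq_le (B : ℕ) :
    ∑ m ∈ Finset.Icc 1 B, (rr m)^2 ≤ Real.exp 4 * B := by
  classical
  set P := (Finset.range (B+1)).filter Nat.Prime with hP
  have hPmem : ∀ {p : ℕ}, p ∈ P → p.Prime := by
    intro p hp; exact (Finset.mem_filter.mp hp).2
  have hpf : ∀ m ∈ Finset.Icc 1 B, m.primeFactors ⊆ P := by
    intro m hm p hp
    rw [Finset.mem_Icc] at hm
    refine Finset.mem_filter.mpr ⟨Finset.mem_range.mpr ?_, Nat.prime_of_mem_primeFactors hp⟩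
    have := Nat.le_of_mem_primeFactors hp
    omega
  have hwnonneg : ∀ S ∈ P.powerset, 0 ≤ ∏ p ∈ S, gg p := by
    intro S hS
    exact Finset.prod_nonneg fun p hp => gg_nonneg (hPmem (Finset.mem_powerset.mp hS hp))
  have step1 : ∑ m ∈ Finset.Icc 1 B, (rr m)^2
      = ∑ m ∈ Finset.Icc 1 B, ∑ S ∈ P.powerset,
          (if S ⊆ m.primeFactors then ∏ p ∈ S, gg p else 0) := by
    refine Finset.sum_congr rfl fun m hm => ?_
    have hm1 : 0 < m := by rw [Finset.mem_Icc] at hm; omega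
    rw [rr_sq_eq hm1, ← Finset.sum_filter]
    congr 1
    ext S
    simp only [Finset.mem_filter, Finset.mem_powerset]
    constructor
    · intro h; exact ⟨h.trans (hpf m hm), h⟩
    · rintro ⟨-, h⟩; exact h
  have step2 : ∑ m ∈ Finset.Icc 1 B, ∑ S ∈ P.powerset,
          (if S ⊆ m.primeFactors then ∏ p ∈ S, gg p else 0)
      = ∑ S ∈ P.powerset,
          (((Finset.Icc 1 B).filter (fun m => S ⊆ m.primeFactors)).card : ℝ) * ∏ p ∈ S, gg p := by
    rw [Finset.sum_comm]
    refine Finset.sum_congr rfl fun S hS => ?_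
    rw [← Finset.sum_filter, Finset.sum_const, nsmul_eq_mul]
  have hcard : ∀ S ∈ P.powerset,
      (((Finset.Icc 1 B).filter (fun m => S ⊆ m.primeFactors)).card : ℝ)
        ≤ (B:ℝ) / (∏ p ∈ S, (p:ℝ)) := by
    intro S hS
    have hsub : (Finset.Icc 1 B).filter (fun m => S ⊆ m.primeFactors)
        ⊆ (Finset.Ioc 0 B).filter (fun m => (∏ p ∈ S, p) ∣ m) := by
      intro m hm
      rw [Finset.mem_filter, Finset.mem_Icc] at hm
      obtain ⟨⟨hm1, hm2⟩, hm3⟩ := hm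
      refine Finset.mem_filter.mpr ⟨by rw [Finset.mem_Ioc]; omega, ?_⟩
      refine Finset.prod_primes_dvd m ?_ ?_
      · intro p hp; exact (hPmem (Finset.mem_powerset.mp hS hp)).prime
      · intro p hp; exact Nat.dvd_of_mem_primeFactors (hm3 hp)
    have h1 : ((Finset.Icc 1 B).filter (fun m => S ⊆ m.primeFactors)).card
        ≤ B / (∏ p ∈ S, p) := by
      rw [← Nat.Ioc_filter_dvd_card_eq_div]
      exact Finset.card_le_card hsub
    calc (((Finset.Icc 1 B).filter (fun m => S ⊆ m.primeFactors)).card : ℝ)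
        ≤ ((B / (∏ p ∈ S, p) : ℕ) : ℝ) := by exact_mod_cast h1
      _ ≤ (B:ℝ) / ((∏ p ∈ S, p : ℕ) : ℝ) := Nat.cast_div_le
      _ = (B:ℝ) / (∏ p ∈ S, (p:ℝ)) := by rw [Nat.cast_prod]
  have step4 : ∑ S ∈ P.powerset,
          (((Finset.Icc 1 B).filter (fun m => S ⊆ m.primeFactors)).card : ℝ) * ∏ p ∈ S, gg p
      ≤ (B:ℝ) * ∑ S ∈ P.powerset, ∏ p ∈ S, (gg p / p) := by
    rw [Finset.mul_sum]
    refine Finset.sum_le_sum fun S hS => ?_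
    have h2 : ∏ p ∈ S, (gg p / (p:ℝ)) = (∏ p ∈ S, gg p) / (∏ p ∈ S, (p:ℝ)) :=
      Finset.prod_div_distrib _ _
    calc (((Finset.Icc 1 B).filter (fun m => S ⊆ m.primeFactors)).card : ℝ) * ∏ p ∈ S, gg p
        ≤ ((B:ℝ) / (∏ p ∈ S, (p:ℝ))) * ∏ p ∈ S, gg p :=
          mul_le_mul_of_nonneg_right (hcard S hS) (hwnonneg S hS)
      _ = (B:ℝ) * ∏ p ∈ S, (gg p / p) := by rw [h2]; ring
  have step5 : ∑ S ∈ P.powerset, ∏ p ∈ S, (gg p / p) = ∏ p ∈ P, (gg p / p + 1) := by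
    rw [Finset.prod_add]
    exact (Finset.sum_congr rfl fun S hS => by simp).symm
  have hterm : ∀ p ∈ P, gg p / p ≤ 2 / ((p:ℝ)-1)^2 := by
    intro p hp
    have h1 : (1:ℝ) < (p:ℝ) := one_lt_cast_of_prime (hPmem hp)
    have hp0 : (0:ℝ) < (p:ℝ) := by linarith
    have hp1 : (0:ℝ) < ((p:ℝ)-1)^2 := by nlinarith
    have hgg : gg p = (2*(p:ℝ)-1)/(((p:ℝ)-1)^2) := by
      rw [gg, div_pow]
      have hne : (p:ℝ) - 1 ≠ 0 := by linarith
      field_simp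
      ring
    rw [hgg, div_div]
    rw [div_le_div_iff₀ (by positivity) hp1]
    nlinarith
  have hsumle : ∑ p ∈ P, gg p / p ≤ 4 := by
    have h1 : ∑ p ∈ P, gg p / p ≤ ∑ p ∈ P, 2 / ((p:ℝ)-1)^2 :=
      Finset.sum_le_sum hterm
    have hPsub : P ⊆ Finset.Icc 2 B := by
      intro p hp
      rw [hP, Finset.mem_filter, Finset.mem_range] at hp
      rw [Finset.mem_Icc]
      refine ⟨hp.2.two_le, ?_⟩
      have := hp.1
      omega
    have h2 : ∑ p ∈ P, 2 / ((p:ℝ)-1)^2 ≤ ∑ n ∈ Finset.Icc 2 B, 2 / ((n:ℝ)-1)^2 := by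
      refine Finset.sum_le_sum_of_subset_of_nonneg hPsub fun n hn _ => ?_
      have h2n : 2 ≤ n := (Finset.mem_Icc.mp hn).1
      have h2n' : (2:ℝ) ≤ (n:ℝ) := by exact_mod_cast h2n
      have : (0:ℝ) < ((n:ℝ)-1)^2 := by nlinarith
      positivity
    have h3 : ∑ n ∈ Finset.Icc 2 B, 2 / ((n:ℝ)-1)^2 ≤ 4 := by
      by_cases hB : 2 ≤ B
      · have hmain := sum_sq_one_div_le B hB
        have hB2 : (2:ℝ) ≤ (B:ℝ) := by exact_mod_cast hB
        have heq : ∑ n ∈ Finset.Icc 2 B, 2 / ((n:ℝ)-1)^2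
            = 2 * ∑ n ∈ Finset.Icc 2 B, (1:ℝ)/((n:ℝ)-1)^2 := by
          rw [Finset.mul_sum]; exact Finset.sum_congr rfl fun n hn => by ring
        rw [heq]
        have hp0 : (0:ℝ) ≤ 1/((B:ℝ)-1) := by
          have : (0:ℝ) < (B:ℝ) - 1 := by linarith
          positivity
        linarith
      · have : Finset.Icc 2 B = ∅ := by
          rw [Finset.Icc_eq_empty_iff]; omega
        rw [this]
        norm_num
    linarith
  have hprodle : ∏ p ∈ P, (gg p / p + 1) ≤ Real.exp 4 := by
    have h1 : ∏ p ∈ P, (gg p / p + 1) ≤ ∏ p ∈ P, Real.exp (gg p / p) := by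
      refine Finset.prod_le_prod (fun p hp => ?_) (fun p hp => Real.add_one_le_exp _)
      have hg := gg_nonneg (hPmem hp)
      have hp0 : (0:ℝ) < (p:ℝ) := by exact_mod_cast (hPmem hp).pos
      positivity
    have h2 : ∏ p ∈ P, Real.exp (gg p / p) = Real.exp (∑ p ∈ P, gg p / p) :=
      (Real.exp_sum P _).symm
    calc ∏ p ∈ P, (gg p / p + 1) ≤ Real.exp (∑ p ∈ P, gg p / p) := h1.trans_eq h2
      _ ≤ Real.exp 4 := Real.exp_le_exp.mpr hsumle
  calc ∑ m ∈ Finset.Icc 1 B, (rr m)^2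
      ≤ (B:ℝ) * ∑ S ∈ P.powerset, ∏ p ∈ S, (gg p / p) := by
        rw [step1, step2]; exact step4
    _ = (B:ℝ) * ∏ p ∈ P, (gg p / p + 1) := by rw [step5]
    _ ≤ (B:ℝ) * Real.exp 4 := mul_le_mul_of_nonneg_left hprodle (by positivity)
    _ = Real.exp 4 * B := by ring

lemma pointwise_le {m : ℕ} (hm : 0 < m) :
    (m:ℝ) ≤ Real.exp 4 * ((Nat.totient m : ℝ))^2 := by
  have h1 : (rr m)^2 ≤ Real.exp 4 * m := by
    have hsingle : (rr m)^2 ≤ ∑ k ∈ Finset.Icc 1 m, (rr k)^2 := by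
      refine Finset.single_le_sum (f := fun k => (rr k)^2) (fun k _ => sq_nonneg _) ?_
      rw [Finset.mem_Icc]; omega
    exact hsingle.trans (sum_rr_sq_le m)
  have hφ : (0:ℝ) < (Nat.totient m : ℝ) := totient_pos_real hm
  have hm0 : (0:ℝ) < (m:ℝ) := by exact_mod_cast hm
  rw [rr, div_pow, div_le_iff₀ (by positivity)] at h1
  nlinarith

lemma tail_sum_le (T B : ℕ) (hT : 1 ≤ T) :
    ∑ m ∈ Finset.Ioc T B, (1:ℝ)/((Nat.totient m : ℝ))^2 ≤ 4 * Real.exp 4 / T := by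
  have hT0 : (0:ℝ) < (T:ℝ) := by exact_mod_cast hT
  have key : ∀ J : ℕ, ∑ m ∈ Finset.Ioc T (2^J * T), (1:ℝ)/((Nat.totient m : ℝ))^2
      ≤ (4 * Real.exp 4 / T) * (1 - (1/2:ℝ)^J) := by
    intro J
    induction J with
    | zero => simp
    | succ J ih =>
      have hle1 : T ≤ 2^J * T := Nat.le_mul_of_pos_left T (Nat.two_pow_pos J)
      have hle2 : 2^J * T ≤ 2^(J+1) * T := by
        have : (2:ℕ)^J ≤ 2^(J+1) := Nat.pow_le_pow_right (by norm_num) (by omega)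
        exact Nat.mul_le_mul_right T this
      rw [← Finset.sum_Ioc_consecutive _ hle1 hle2]
      have hMpos : (0:ℝ) < ((2^J * T : ℕ) : ℝ) := by
        have : 0 < 2^J * T := Nat.mul_pos (Nat.two_pow_pos J) (by omega)
        exact_mod_cast this
      have hblock : ∑ m ∈ Finset.Ioc (2^J * T) (2^(J+1) * T), (1:ℝ)/((Nat.totient m : ℝ))^2
          ≤ 2 * Real.exp 4 / ((2:ℝ)^J * (T:ℝ)) := by
        have hstep : ∀ m ∈ Finset.Ioc (2^J * T) (2^(J+1) * T),
            (1:ℝ)/((Nat.totient m : ℝ))^2 ≤ (rr m)^2 / (((2^J * T : ℕ):ℝ))^2 := by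
          intro m hm
          rw [Finset.mem_Ioc] at hm
          have hm0 : 0 < m := by
            have : 0 < 2^J * T := by positivity
            omega
          have hmR : ((2^J * T : ℕ):ℝ) < (m:ℝ) := by exact_mod_cast hm.1
          have hφ : (0:ℝ) < (Nat.totient m : ℝ) := totient_pos_real hm0
          have hm0R : (0:ℝ) < (m:ℝ) := by exact_mod_cast hm0
          have heq : (rr m)^2 / (((2^J * T : ℕ):ℝ))^2
              = ((m:ℝ)^2 / (((2^J * T : ℕ):ℝ))^2) * ((1:ℝ)/((Nat.totient m : ℝ))^2) := by
            rw [rr, div_pow]; ring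
          rw [heq]
          have h1 : (1:ℝ) ≤ (m:ℝ)^2 / (((2^J * T : ℕ):ℝ))^2 := by
            rw [le_div_iff₀ (by positivity)]
            nlinarith
          nlinarith [one_div_pos.mpr (pow_pos hφ 2)]
        have hsum2 : ∑ m ∈ Finset.Ioc (2^J * T) (2^(J+1) * T), (rr m)^2
            ≤ Real.exp 4 * ((2^(J+1) * T : ℕ):ℝ) := by
          have hsub : Finset.Ioc (2^J * T) (2^(J+1) * T) ⊆ Finset.Icc 1 (2^(J+1) * T) := by
            intro m hm
            rw [Finset.mem_Ioc] at hm
            rw [Finset.mem_Icc]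
            have : 0 < 2^J * T := Nat.mul_pos (Nat.two_pow_pos J) (by omega)
            omega
          exact (Finset.sum_le_sum_of_subset_of_nonneg hsub
            (fun _ _ _ => sq_nonneg _)).trans (sum_rr_sq_le _)
        calc ∑ m ∈ Finset.Ioc (2^J * T) (2^(J+1) * T), (1:ℝ)/((Nat.totient m : ℝ))^2
            ≤ ∑ m ∈ Finset.Ioc (2^J * T) (2^(J+1) * T), (rr m)^2 / (((2^J * T : ℕ):ℝ))^2 :=
              Finset.sum_le_sum hstep
          _ = (∑ m ∈ Finset.Ioc (2^J * T) (2^(J+1) * T), (rr m)^2) / (((2^J * T : ℕ):ℝ))^2 := by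
              rw [Finset.sum_div]
          _ ≤ (Real.exp 4 * ((2^(J+1) * T : ℕ):ℝ)) / (((2^J * T : ℕ):ℝ))^2 := by
              gcongr
          _ = 2 * Real.exp 4 / ((2:ℝ)^J * (T:ℝ)) := by
              push_cast
              have h2J : ((2:ℝ)^J) ≠ 0 := by positivity
              field_simp
              ring
      have harith : (4 * Real.exp 4 / T) * (1 - (1/2:ℝ)^J) + 2 * Real.exp 4 / ((2:ℝ)^J * (T:ℝ))
          = (4 * Real.exp 4 / T) * (1 - (1/2:ℝ)^(J+1)) := by
        have h2J : ((2:ℝ)^J) ≠ 0 := by positivity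
        rw [div_pow, div_pow, one_pow, one_pow]
        field_simp
        ring
      linarith [ih, hblock]
  -- conclude for general B
  have hsub : Finset.Ioc T B ⊆ Finset.Ioc T (2^B * T) := by
    intro m hm
    rw [Finset.mem_Ioc] at hm ⊢
    have h1 : B < 2^B := Nat.lt_two_pow_self
    have h2 : 2^B ≤ 2^B * T := Nat.le_mul_of_pos_right _ (by omega)
    omega
  have hmono : ∑ m ∈ Finset.Ioc T B, (1:ℝ)/((Nat.totient m : ℝ))^2
      ≤ ∑ m ∈ Finset.Ioc T (2^B * T), (1:ℝ)/((Nat.totient m : ℝ))^2 := by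
    refine Finset.sum_le_sum_of_subset_of_nonneg hsub fun m hm _ => by positivity
  have h2 := key B
  have h3 : (4 * Real.exp 4 / T) * (1 - (1/2:ℝ)^B) ≤ 4 * Real.exp 4 / T := by
    have hc : (0:ℝ) ≤ 4 * Real.exp 4 / T := by positivity
    have : (0:ℝ) ≤ (1/2:ℝ)^B := by positivity
    nlinarith
  linarith

lemma master_count (T B : ℕ) (hT : 1 ≤ T) :
    ((((Finset.Icc 1 B).filter (fun m => Nat.totient m ≤ T)).card : ℝ))
      ≤ (1 + 4 * Real.exp 4) * T := by
  classical
  set F := (Finset.Icc 1 B).filter (fun m => Nat.totient m ≤ T) with hF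
  have hT0 : (0:ℝ) < (T:ℝ) := by exact_mod_cast hT
  have hsplit : (F.filter (fun m => m ≤ T)).card + (F.filter (fun m => ¬ m ≤ T)).card
      = F.card := Finset.card_filter_add_card_filter_not _
  have hcard1 : (F.filter (fun m => m ≤ T)).card ≤ T := by
    have hsub : F.filter (fun m => m ≤ T) ⊆ Finset.Icc 1 T := by
      intro m hm
      rw [Finset.mem_filter, hF, Finset.mem_filter, Finset.mem_Icc] at hm
      rw [Finset.mem_Icc]
      exact ⟨hm.1.1.1, hm.2⟩
    have := Finset.card_le_card hsub
    simpa [Nat.card_Icc] using this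
  have hcard2 : ((F.filter (fun m => ¬ m ≤ T)).card : ℝ) ≤ 4 * Real.exp 4 * T := by
    set G := F.filter (fun m => ¬ m ≤ T) with hG
    have hmem : ∀ m ∈ G, 0 < m ∧ Nat.totient m ≤ T ∧ T < m ∧ m ≤ B := by
      intro m hm
      rw [hG, Finset.mem_filter, hF, Finset.mem_filter, Finset.mem_Icc] at hm
      exact ⟨by omega, hm.1.2, by omega, hm.1.1.2⟩
    have h1 : (G.card : ℝ) = ∑ m ∈ G, (1:ℝ) := by simp
    have h2 : ∑ m ∈ G, (1:ℝ) ≤ ∑ m ∈ G, (T:ℝ)^2 * ((1:ℝ)/((Nat.totient m : ℝ))^2) := by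
      refine Finset.sum_le_sum fun m hm => ?_
      obtain ⟨hm0, hmT, -, -⟩ := hmem m hm
      have hφ : (0:ℝ) < (Nat.totient m : ℝ) := totient_pos_real hm0
      have hφT : (Nat.totient m : ℝ) ≤ (T:ℝ) := by exact_mod_cast hmT
      rw [mul_one_div, le_div_iff₀ (by positivity)]
      nlinarith
    have h3 : ∑ m ∈ G, (T:ℝ)^2 * ((1:ℝ)/((Nat.totient m : ℝ))^2)
        = (T:ℝ)^2 * ∑ m ∈ G, (1:ℝ)/((Nat.totient m : ℝ))^2 := by
      rw [Finset.mul_sum]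
    have h4 : ∑ m ∈ G, (1:ℝ)/((Nat.totient m : ℝ))^2
        ≤ ∑ m ∈ Finset.Ioc T B, (1:ℝ)/((Nat.totient m : ℝ))^2 := by
      refine Finset.sum_le_sum_of_subset_of_nonneg ?_ fun m hm _ => by positivity
      intro m hm
      obtain ⟨-, -, h5, h6⟩ := hmem m hm
      rw [Finset.mem_Ioc]
      exact ⟨h5, h6⟩
    have h5 := tail_sum_le T B hT
    calc (G.card : ℝ) ≤ (T:ℝ)^2 * ∑ m ∈ Finset.Ioc T B, (1:ℝ)/((Nat.totient m : ℝ))^2 := by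
          rw [h1]
          exact h2.trans (h3.le.trans (mul_le_mul_of_nonneg_left h4 (by positivity)))
      _ ≤ (T:ℝ)^2 * (4 * Real.exp 4 / T) := mul_le_mul_of_nonneg_left h5 (by positivity)
      _ = 4 * Real.exp 4 * T := by field_simp
  have hcard1R : ((F.filter (fun m => m ≤ T)).card : ℝ) ≤ (T:ℝ) := by exact_mod_cast hcard1
  have : (F.card : ℝ) = ((F.filter (fun m => m ≤ T)).card : ℝ)
      + ((F.filter (fun m => ¬ m ≤ T)).card : ℝ) := by exact_mod_cast hsplit.symm
  rw [this]
  nlinarith [Real.exp_pos (4:ℝ)]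

lemma exp_four_le : Real.exp 4 ≤ 55 := by
  have h1 : Real.exp 1 < 2.7182818286 := Real.exp_one_lt_d9
  have h0 : (0:ℝ) < Real.exp 1 := Real.exp_pos 1
  have h4 : Real.exp (4:ℝ) = Real.exp 1 ^ (4:ℕ) := by
    rw [Real.exp_one_pow]
    norm_num
  rw [h4]
  calc Real.exp 1 ^ (4:ℕ) ≤ (2.7182818286:ℝ) ^ (4:ℕ) := by
        exact pow_le_pow_left₀ h0.le h1.le 4
    _ ≤ 55 := by norm_num

theorem card_totient_le_x :
    ∃ C : ℝ, 0 < C ∧ ∀ x : ℝ, 1 ≤ x →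
      ({m : ℕ | 0 < m ∧ (m.totient : ℝ) ≤ x}.ncard : ℝ) ≤ C * x ∧
      ∑ d ∈ Finset.Icc 1 ⌊x⌋₊, ({m : ℕ | 0 < m ∧ m.totient = d}.ncard : ℝ) ≤ C * x := by
  classical
  refine ⟨1 + 4 * Real.exp 4, by positivity, fun x hx => ?_⟩
  set C : ℝ := 1 + 4 * Real.exp 4 with hC
  have hx0 : (0:ℝ) ≤ x := by linarith
  set T : ℕ := ⌊x⌋₊ with hTdef
  have hT : 1 ≤ T := by
    rw [hTdef]
    exact Nat.le_floor (by exact_mod_cast hx)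
  have hTx : (T:ℝ) ≤ x := Nat.floor_le hx0
  set B : ℕ := 55 * T^2 with hBdef
  set F := (Finset.Icc 1 B).filter (fun m => Nat.totient m ≤ T) with hF
  have hCpos : (0:ℝ) < C := by rw [hC]; positivity
  -- membership bound
  have hbound : ∀ m : ℕ, 0 < m → Nat.totient m ≤ T → (1 ≤ m ∧ m ≤ B) := by
    intro m hm hmT
    refine ⟨hm, ?_⟩
    have h1 : (m:ℝ) ≤ Real.exp 4 * ((Nat.totient m : ℝ))^2 := pointwise_le hm
    have h2 : ((Nat.totient m : ℝ)) ≤ (T:ℝ) := by exact_mod_cast hmT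
    have h3 : (0:ℝ) ≤ (Nat.totient m : ℝ) := by positivity
    have h4 : (m:ℝ) ≤ 55 * (T:ℝ)^2 := by
      have := exp_four_le
      have hT0 : (0:ℝ) ≤ (T:ℝ) := by positivity
      nlinarith [Real.exp_pos (4:ℝ)]
    have h5 : (m:ℝ) ≤ ((B:ℕ):ℝ) := by
      rw [hBdef]
      push_cast
      linarith
    exact_mod_cast h5
  have hFcard : (F.card : ℝ) ≤ C * x := by
    have h1 := master_count T B hT
    calc (F.card : ℝ) ≤ (1 + 4 * Real.exp 4) * T := h1
      _ ≤ C * x := by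
          rw [hC]
          have : (0:ℝ) < 1 + 4 * Real.exp 4 := by positivity
          nlinarith
  constructor
  · -- first part
    have hEF : {m : ℕ | 0 < m ∧ (m.totient : ℝ) ≤ x} = ↑F := by
      ext m
      simp only [Set.mem_setOf_eq, Finset.coe_filter, hF, Finset.mem_Icc, Set.mem_setOf_eq]
      constructor
      · rintro ⟨hm0, hmx⟩
        have hmT : Nat.totient m ≤ T := by
          rw [hTdef]
          exact Nat.le_floor hmx
        exact ⟨hbound m hm0 hmT, hmT⟩
      · rintro ⟨⟨h1, h2⟩, h3⟩
        refine ⟨by omega, ?_⟩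
        calc ((Nat.totient m : ℝ)) ≤ (T:ℝ) := by exact_mod_cast h3
          _ ≤ x := hTx
    rw [hEF, Set.ncard_coe_finset]
    exact hFcard
  · -- second part
    have hfiber : ∀ d ∈ Finset.Icc 1 T,
        {m : ℕ | 0 < m ∧ m.totient = d}
          = ↑((Finset.Icc 1 B).filter (fun m => Nat.totient m = d)) := by
      intro d hd
      rw [Finset.mem_Icc] at hd
      ext m
      simp only [Set.mem_setOf_eq, Finset.coe_filter, Finset.mem_Icc, Set.mem_setOf_eq]
      constructor
      · rintro ⟨hm0, hmd⟩
        exact ⟨hbound m hm0 (by omega), hmd⟩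
      · rintro ⟨⟨h1, h2⟩, h3⟩
        exact ⟨by omega, h3⟩
    have hsum : ∑ d ∈ Finset.Icc 1 T, ({m : ℕ | 0 < m ∧ m.totient = d}.ncard : ℝ)
        = ∑ d ∈ Finset.Icc 1 T,
            ((((Finset.Icc 1 B).filter (fun m => Nat.totient m = d)).card : ℕ) : ℝ) := by
      refine Finset.sum_congr rfl fun d hd => ?_
      rw [hfiber d hd, Set.ncard_coe_finset]
    have hfib2 : ∀ d ∈ Finset.Icc 1 T,
        (Finset.Icc 1 B).filter (fun m => Nat.totient m = d)
          = F.filter (fun m => Nat.totient m = d) := by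
      intro d hd
      rw [Finset.mem_Icc] at hd
      rw [hF, Finset.filter_filter]
      refine (Finset.filter_congr fun m hm => ?_).symm
      constructor
      · rintro ⟨-, h⟩; exact h
      · intro h; exact ⟨by omega, h⟩
    have hcardsum : ∑ d ∈ Finset.Icc 1 T,
        (((Finset.Icc 1 B).filter (fun m => Nat.totient m = d)).card) = F.card := by
      have heq : ∑ d ∈ Finset.Icc 1 T,
          (((Finset.Icc 1 B).filter (fun m => Nat.totient m = d)).card)
          = ∑ d ∈ Finset.Icc 1 T, ((F.filter (fun m => Nat.totient m = d)).card) :=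
        Finset.sum_congr rfl fun d hd => by rw [hfib2 d hd]
      rw [heq]
      refine (Finset.card_eq_sum_card_fiberwise ?_).symm
      intro m hm
      rw [hF, Finset.mem_coe, Finset.mem_filter, Finset.mem_Icc] at hm
      rw [Finset.mem_coe, Finset.mem_Icc]
      have : 0 < Nat.totient m := Nat.totient_pos.mpr (by omega)
      exact ⟨this, hm.2⟩
    rw [hsum]
    push_cast
    rw [← Nat.cast_sum] at *
    calc ((∑ d ∈ Finset.Icc 1 T,
            (((Finset.Icc 1 B).filter (fun m => Nat.totient m = d)).card) : ℕ) : ℝ)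
        = (F.card : ℝ) := by rw [hcardsum]
      _ ≤ C * x := hFcard
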